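/- Second part of the optimal refuelling strategy (Lemma 1, case c(v_n) ≥ c(v_{n+1}), strict version): let x be an optimal plan and let i < n−1 be an index with x i > 0 and c i > c (i+1). Then at stop i the vehicle buys only enough fuel to reach stop i+1 with an empty tank, i.e. f (i+1) = 0. (Otherwise, transferring the amount min(x i, f (i+1)) > 0 of purchase from stop i to stop i+1 would yield a feasible plan of strictly smaller cost.) -/

import Mathlib

/-- Fuel level recursion on ℕ: level 0 is the initial fuel `q0`, and the level after
stop `i` is the previous level plus the refuel amount `x i` minus the consumption `d i`. -/
noncomputable def fuelNat (q0 : ℝ) (d x : ℕ → ℝ) : ℕ → ℝ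
  | 0 => q0
  | i + 1 => fuelNat q0 d x i + x i - d i

/-- Fuel levels `f : Fin (n+1) → ℝ` of a plan `x : Fin n → ℝ` with consumptions `d`,
initial fuel `q0`: `f 0 = q0` and `f (i+1) = f i + x i - d i`. -/
noncomputable def fuel {n : ℕ} (q0 : ℝ) (d x : Fin n → ℝ) (i : Fin (n + 1)) : ℝ :=
  fuelNat q0 (fun j => if h : j < n then d ⟨j, h⟩ else 0)
    (fun j => if h : j < n then x ⟨j, h⟩ else 0) i

/-- A plan `x` is feasible (for tank capacity `Q` and initial fuel `q0`) if for every stop `i`: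
`x i ≥ 0`, `f i + x i ≤ Q`, and `f (i+1) ≥ 0`. -/
def Feasible {n : ℕ} (Q q0 : ℝ) (d x : Fin n → ℝ) : Prop :=
  ∀ i : Fin n, 0 ≤ x i ∧ fuel q0 d x i.castSucc + x i ≤ Q ∧ 0 ≤ fuel q0 d x i.succ

/-- Cost of a plan: `Σ_i (c i) * (x i)`. -/
noncomputable def cost {n : ℕ} (c x : Fin n → ℝ) : ℝ := ∑ i, c i * x i

lemma fuelNat_eq_sum (q0 : ℝ) (d x : ℕ → ℝ) (k : ℕ) :
    fuelNat q0 d x k = q0 + ∑ j ∈ Finset.range k, (x j - d j) := by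
  induction k with
  | zero => simp [fuelNat]
  | succ k ih => rw [fuelNat, ih, Finset.sum_range_succ]; ring

/-- Lemma 1, case `c i > c (i+1)`, strict version: at an optimal plan, if
stop `i < n-1` is a refuelling stop and `c i > c (i+1)`, then the vehicle buys only enough
fuel at `i` to reach stop `i+1` with an empty tank: `f (i+1) = 0`. -/
theorem optimal_just_enough_when_next_cheaper {n : ℕ} (Q q0 : ℝ) (hQ : 0 < Q)
    (hq0 : 0 ≤ q0 ∧ q0 ≤ Q) (d c : Fin n → ℝ)
    (hd : ∀ i, 0 ≤ d i ∧ d i ≤ Q) (hc : ∀ i, 0 ≤ c i)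
    (x : Fin n → ℝ) (hfeas : Feasible Q q0 d x)
    (hopt : ∀ y : Fin n → ℝ, Feasible Q q0 d y → cost c x ≤ cost c y)
    (i : Fin n) (hi : (i : ℕ) + 1 < n)
    (hxi : 0 < x i) (hci : c ⟨(i : ℕ) + 1, hi⟩ < c i) :
    fuel q0 d x i.succ = 0 := by
  by_contra hne
  have hf1 : 0 < fuel q0 d x i.succ := lt_of_le_of_ne (hfeas i).2.2 (Ne.symm hne)
  set ε := min (x i) (fuel q0 d x i.succ) with hεdef
  have hεpos : 0 < ε := lt_min hxi hf1
  have hεx : ε ≤ x i := min_le_left _ _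
  have hεf : ε ≤ fuel q0 d x i.succ := min_le_right _ _
  set m := (i : ℕ) with hm
  have hmn : m < n := i.isLt
  set i' : Fin n := ⟨m + 1, hi⟩ with hi'
  set y : Fin n → ℝ :=
    fun j => x j + (if (j : ℕ) = m then -ε else 0) + (if (j : ℕ) = m + 1 then ε else 0)
    with hy
  have hfuel : ∀ k : Fin (n+1), fuel q0 d y k
      = fuel q0 d x k + (if m < (k : ℕ) then -ε else 0) + (if m + 1 < (k : ℕ) then ε else 0) := by
    intro k
    unfold fuel
    rw [fuelNat_eq_sum, fuelNat_eq_sum]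
    have key : ∀ j, ((if h : j < n then y ⟨j, h⟩ else 0) - (if h : j < n then d ⟨j, h⟩ else 0))
        = ((if h : j < n then x ⟨j, h⟩ else 0) - (if h : j < n then d ⟨j, h⟩ else 0))
          + (if j = m then -ε else 0) + (if j = m + 1 then ε else 0) := by
      intro j
      by_cases hj : j < n
      · simp only [hy, dif_pos hj]
        ring
      · have h1 : j ≠ m := by omega
        have h2 : j ≠ m + 1 := by omega
        simp [hj, h1, h2]
    simp only [key, Finset.sum_add_distrib]
    rw [Finset.sum_ite_eq' (Finset.range k) m (fun _ => -ε),
        Finset.sum_ite_eq' (Finset.range k) (m+1) (fun _ => ε)]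
    simp only [Finset.mem_range]
    ring
  have hfuel2 : ∀ k : Fin (n+1), fuel q0 d y k
      = fuel q0 d x k - (if (k : ℕ) = m + 1 then ε else 0) := by
    intro k
    rw [hfuel k]
    rcases Nat.lt_trichotomy (k : ℕ) (m + 1) with h | h | h
    · have h1 : ¬ m < (k : ℕ) := by omega
      have h2 : ¬ m + 1 < (k : ℕ) := by omega
      have h3 : (k : ℕ) ≠ m + 1 := by omega
      simp [h1, h2, h3]
    · have h1 : m < (k : ℕ) := by omega
      have h2 : ¬ m + 1 < (k : ℕ) := by omega
      simp [h1, h2, h]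
      ring
    · have h1 : m < (k : ℕ) := by omega
      have h2 : (k : ℕ) ≠ m + 1 := by omega
      simp [h1, h, h2]
  have hyfeas : Feasible Q q0 d y := by
    intro j
    obtain ⟨h1, h2, h3⟩ := hfeas j
    have hcs : ((j.castSucc : Fin (n+1)) : ℕ) = (j : ℕ) := rfl
    have hsu : ((j.succ : Fin (n+1)) : ℕ) = (j : ℕ) + 1 := rfl
    rcases Nat.lt_trichotomy (j : ℕ) m with hj | hj | hj
    · have e1 : (j : ℕ) ≠ m := by omega
      have e2 : (j : ℕ) ≠ m + 1 := by omega
      have e3 : (j : ℕ) + 1 ≠ m + 1 := by omega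
      rw [hfuel2, hfuel2]
      refine ⟨?_, ?_, ?_⟩ <;>
        simp [hy, hfuel2, hcs, hsu, e1, e2, e3, h1, h2, h3]
    · -- j = i
      have hj' : j = i := Fin.ext hj
      subst hj'
      have e1 : (j : ℕ) ≠ m + 1 := by omega
      refine ⟨?_, ?_, ?_⟩
      · simp only [hy, hj, if_pos rfl, e1, if_neg, if_neg e1]
        simp; linarith
      · rw [hfuel2]
        simp only [hy, hcs, hj, if_pos rfl, if_neg e1, e1]
        simp
        linarith
      · rw [hfuel2]
        simp only [hsu, hj, if_pos rfl, if_true]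
        linarith
    · rcases Nat.eq_or_lt_of_le hj with hj1 | hj1
      · -- j = i', j.val = m+1
        have e1 : (j : ℕ) ≠ m := by omega
        have e2 : (j : ℕ) = m + 1 := hj1.symm
        have e3 : (j : ℕ) + 1 ≠ m + 1 := by omega
        refine ⟨?_, ?_, ?_⟩
        · simp only [hy, if_neg e1, if_pos e2]
          linarith
        · rw [hfuel2]
          have e4 : m + 1 ≠ m := by omega
          simp only [hy, hcs, if_neg e1, if_pos e2, e2, if_pos rfl, if_true, if_neg e4]
          linarith
        · rw [hfuel2]
          simp only [hsu, if_neg e3]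
          linarith
      · have e1 : (j : ℕ) ≠ m := by omega
        have e2 : (j : ℕ) ≠ m + 1 := by omega
        have e3 : (j : ℕ) + 1 ≠ m + 1 := by omega
        rw [hfuel2, hfuel2]
        refine ⟨?_, ?_, ?_⟩ <;>
          simp [hy, hfuel2, hcs, hsu, e1, e2, e3, h1, h2, h3]
  have hcost : cost c y = cost c x + ε * (c i' - c i) := by
    unfold cost
    have key : ∀ j : Fin n, c j * y j
        = c j * x j + (if j = i then c j * (-ε) else 0) + (if j = i' then c j * ε else 0) := by
      intro j
      have e1 : ((j : ℕ) = m) = (j = i) := by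
        simp [Fin.ext_iff, hm]
      have e2 : ((j : ℕ) = m + 1) = (j = i') := by
        simp [Fin.ext_iff, hi']
      simp only [hy, e1, e2, mul_add]
      split_ifs <;> ring
    simp only [key, Finset.sum_add_distrib]
    rw [Finset.sum_ite_eq' Finset.univ i (fun j => c j * (-ε)),
        Finset.sum_ite_eq' Finset.univ i' (fun j => c j * ε)]
    simp
    ring
  have := hopt y hyfeas
  rw [hcost] at this
  nlinarith [mul_pos hεpos (sub_pos.2 hci)]
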